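/- Let g, g1, g2, g3, g12, g13, g23 be positive reals, X = √(g·g23 + g2·g3), Y = √(g·g13 + g1·g3), Z = √(g·g12 + g1·g2), and let g123 = (2g1g2g3 + g(g1g23 + g2g13 + g3g12) + 2XYZ)/g². Define X1 = (g1X + YZ)/g, Y2 = (g2Y + XZ)/g, Z3 = (g3Z + XY)/g. Then (X1·Y2·Z3 + g12·g13·g23)/g123 = (X·Y·Z + g1·g2·g3)/g. -/

import Mathlib

theorem kashaev_self_dual_invariant
    (g g1 g2 g3 g12 g13 g23 X Y Z g123 X1 Y2 Z3 : ℝ)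
    (hg : 0 < g) (hg1 : 0 < g1) (hg2 : 0 < g2) (hg3 : 0 < g3)
    (hg12 : 0 < g12) (hg13 : 0 < g13) (hg23 : 0 < g23)
    (hX : X = Real.sqrt (g * g23 + g2 * g3))
    (hY : Y = Real.sqrt (g * g13 + g1 * g3))
    (hZ : Z = Real.sqrt (g * g12 + g1 * g2))
    (hg123 : g123 = (2 * g1 * g2 * g3 + g * (g1 * g23 + g2 * g13 + g3 * g12)
      + 2 * X * Y * Z) / g ^ 2)
    (hX1 : X1 = (g1 * X + Y * Z) / g)
    (hY2 : Y2 = (g2 * Y + X * Z) / g)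
    (hZ3 : Z3 = (g3 * Z + X * Y) / g) :
    (X1 * Y2 * Z3 + g12 * g13 * g23) / g123 = (X * Y * Z + g1 * g2 * g3) / g := by
  have hXpos : 0 ≤ X := hX ▸ Real.sqrt_nonneg _
  have hYpos : 0 ≤ Y := hY ▸ Real.sqrt_nonneg _
  have hZpos : 0 ≤ Z := hZ ▸ Real.sqrt_nonneg _
  have hXsq : X ^ 2 = g * g23 + g2 * g3 := by
    rw [hX, Real.sq_sqrt (by positivity)]
  have hYsq : Y ^ 2 = g * g13 + g1 * g3 := by
    rw [hY, Real.sq_sqrt (by positivity)]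
  have hZsq : Z ^ 2 = g * g12 + g1 * g2 := by
    rw [hZ, Real.sq_sqrt (by positivity)]
  have hg123pos : 0 < g123 := by
    rw [hg123]
    have : 0 ≤ X * Y * Z := by positivity
    positivity
  have key : (g1 * X + Y * Z) * (g2 * Y + X * Z) * (g3 * Z + X * Y)
      + g ^ 3 * (g12 * g13 * g23)
      = (2 * g1 * g2 * g3 + g * (g1 * g23 + g2 * g13 + g3 * g12) + 2 * X * Y * Z)
        * (X * Y * Z + g1 * g2 * g3) := by
    linear_combination
      (Z ^ 2 * g1 * g3 + Y ^ 2 * g1 * g2 - Y ^ 2 * Z ^ 2 + X * Y * Z * g1) * hXsq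
      + (g1 * g2 ^ 2 * g3 + g * g1 * g2 * g23 - Z ^ 2 * g * g23 + X * Y * Z * g2) * hYsq
      + (g1 * g2 * g3 ^ 2 - g ^ 2 * g13 * g23 + X * Y * Z * g3) * hZsq
  rw [div_eq_div_iff hg123pos.ne' hg.ne', hX1, hY2, hZ3, hg123]
  field_simp
  ring_nf
  linear_combination key
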